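/- For each γ ∈ (0, 11/12] and each δ ∈ ℝ, the function x ↦ ((2-x)² - 4√(1-x)√(1-γx))/x + δ√x(√(1-x) - √(1-γx)) + δ²(1 - √(1-x)√(1-γx)) is strictly increasing on (0,1). -/

import Mathlib

set_option maxHeartbeats 1000000 in
lemma aux_h1_stmt14 (u : ℝ) (hu0 : 0 ≤ u) (h : u^2 ≤ 1/2) :
    0 ≤ 1 - 12*u + 78*u^2 + 24*u^3 - 67*u^4 - 12*u^5 - 12*u^6 := by
  nlinarith [sq_nonneg (1-6*u), sq_nonneg (u-1/4), mul_nonneg hu0 (sq_nonneg (1-3*u)), sq_nonneg (u^2-u/4), mul_nonneg (mul_nonneg hu0 hu0) (sq_nonneg (1-3*u)), mul_nonneg hu0 (by linarith : (0:ℝ) ≤ 1-2*u^2), mul_nonneg (mul_nonneg (mul_nonneg hu0 hu0) (mul_nonneg hu0 hu0)) (by linarith : (0:ℝ) ≤ 1-2*u^2), sq_nonneg (u*(1-3*u)), mul_nonneg (mul_nonneg hu0 hu0) (by linarith : (0:ℝ) ≤ 1-2*u^2)]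

lemma keyQ_stmt14 (u v : ℝ) (hu0 : 0 ≤ u) (hu1 : u ≤ 1) (hv0 : 0 ≤ v) (hv1 : v ≤ 1)
    (hc : 1 + 11*u^2 ≤ 12*v^2) :
    (1-u^2)^2*(1+2*u*v)^2 ≤ 16*(u^2+v^2-2*u^2*v^2) := by
  have huv1 : u*v ≤ 1 := by nlinarith
  have huv0 : 0 ≤ u*v := mul_nonneg hu0 hv0
  have hv2 : 0 ≤ 1 - v^2 := by nlinarith
  rcases le_or_gt (u^2) (1/2) with h | h
  · have hm : u^2 + (1+11*u^2)*(1-2*u^2)/12 ≤ u^2+v^2-2*u^2*v^2 := by nlinarith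
    have huvu : (1-u^2)^2*(1+2*u*v)^2 ≤ (1-u^2)^2*(1+2*u)^2 := by
      have : (1+2*u*v)^2 ≤ (1+2*u)^2 := by nlinarith [mul_le_of_le_one_right hu0 hv1]
      nlinarith [sq_nonneg (1-u^2)]
    have h1 : (1-u^2)^2*(1+2*u)^2 ≤ 16*(u^2 + (1+11*u^2)*(1-2*u^2)/12) := by
      have := aux_h1_stmt14 u hu0 h
      nlinarith [this]
    linarith
  · have hm : 1-u^2 ≤ u^2+v^2-2*u^2*v^2 := by
      nlinarith [mul_nonneg (by linarith : (0:ℝ) ≤ 2*u^2-1) hv2]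
    nlinarith [sq_nonneg (1-u^2)]

lemma keyP_stmt14 (u v : ℝ) (hu0 : 0 < u) (hu1 : u < 1) (hv0 : 0 < v) (hv1 : v ≤ 1)
    (hc : 1 + 11*u^2 ≤ 12*v^2) :
    (1-u^2)^2*(u-v)^2*(1+2*(u*v))^2
      < 8*(u^2+v^2-2*u^2*v^2)*((u*v)*(1-u^2)^2+2*(u-v)^2) := by
  have hQ := keyQ_stmt14 u v hu0.le hu1.le hv0.le hv1 hc
  have hX : (0:ℝ) < 1-u^2 := by nlinarith
  have hm : 0 < u^2+v^2-2*u^2*v^2 := by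
    nlinarith [mul_pos (mul_pos hv0 hv0) hX, mul_nonneg (mul_nonneg hu0.le hu0.le) (by nlinarith : (0:ℝ) ≤ 1-v^2)]
  nlinarith [mul_pos (mul_pos (mul_pos hu0 hv0) (mul_pos hX hX)) hm,
    mul_nonneg (sq_nonneg (u-v)) (sub_nonneg.2 hQ)]

set_option maxHeartbeats 1000000 in
lemma eqA_stmt14 (γ x u v : ℝ) (h1 : u ≠ 0) (h2 : v ≠ 0) (h5 : x ≠ 0)
    (hgx : γ*x = 1-v^2) (hxu : x = 1-u^2) :
    ((((2:ℕ) * (2-x)^1 * (-1) - ((4 * (1/(2*u) * (-1))) * v + (4*u) * (1/(2*v) * (-(γ*1))))) * x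
          - ((2-x)^2 - 4*u*v) * 1)/x^2)
      = ((u*v)*x^2+2*(u-v)^2)/(x^2*(u*v)) := by
  field_simp
  linear_combination (4*u^2) * hgx + (4*v^2) * hxu

set_option maxHeartbeats 1000000 in
lemma eqB_stmt14 (γ x u v s : ℝ) (h1 : u ≠ 0) (h2 : v ≠ 0) (h4 : s ≠ 0)
    (hs2 : s^2 = x) (hgx : γ*x = 1-v^2) (hxu : x = 1-u^2) :
    (1/(2*s))*(u-v) + s*(1/(2*u)*(-1) - 1/(2*v)*(-(γ*1))) = (u-v)*(1+2*(u*v))/(2*(s*(u*v))) := by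
  field_simp
  linear_combination (u*γ-v) * hs2 + u * hgx - v * hxu

set_option maxHeartbeats 1000000 in
lemma eqC_stmt14 (γ x u v : ℝ) (h1 : u ≠ 0) (h2 : v ≠ 0) (h3 : (1:ℝ)-u^2 ≠ 0)
    (hgx : γ*x = 1-v^2) (hxu : x = 1-u^2) :
    (0 - ((1/(2*u)*(-1))*v + u*(1/(2*v)*(-(γ*1)))))
      = (u^2*(1-v^2)+v^2*(1-u^2))/(2*(u*v)*(1-u^2)) := by
  field_simp
  linear_combination (u^2) * hgx - (u^2*γ) * hxu

set_option maxHeartbeats 1000000 in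
lemma derivPos_stmt14 (δ u v s : ℝ) (hu0 : 0 < u) (hu1 : u < 1) (hv0 : 0 < v) (hv1 : v ≤ 1)
    (hs0 : 0 < s) (hs2 : s^2 = 1-u^2) (hcon : 1 + 11*u^2 ≤ 12*v^2) :
    0 < ((u*v)*(1-u^2)^2+2*(u-v)^2)/((1-u^2)^2*(u*v))
      + δ*((u-v)*(1+2*(u*v))/(2*(s*(u*v))))
      + δ^2*((u^2*(1-v^2)+v^2*(1-u^2))/(2*(u*v)*(1-u^2))) := by
  have hX : (0:ℝ) < 1-u^2 := by nlinarith
  have hv2 : (0:ℝ) ≤ 1-v^2 := by nlinarith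
  set A : ℝ := (u^2*(1-v^2)+v^2*(1-u^2))/(2*(u*v)*(1-u^2)) with hA
  set B : ℝ := (u-v)*(1+2*(u*v))/(2*(s*(u*v))) with hB
  set C : ℝ := ((u*v)*(1-u^2)^2+2*(u-v)^2)/((1-u^2)^2*(u*v)) with hC
  have ha0 : 0 < A := by
    apply div_pos ?_ (by positivity)
    nlinarith [mul_pos (mul_pos hv0 hv0) hX, mul_nonneg (mul_nonneg hu0.le hu0.le) hv2]
  have hb2 : B^2 = ((u-v)*(1+2*(u*v)))^2/(4*((1-u^2)*(u*v)^2)) := by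
    rw [hB, div_pow]
    congr 1
    rw [← hs2]; ring
  have hca : C*A = (((u*v)*(1-u^2)^2+2*(u-v)^2)*(u^2*(1-v^2)+v^2*(1-u^2)))
      /(((1-u^2)^2*(u*v))*(2*(u*v)*(1-u^2))) := by
    rw [hC, hA, div_mul_div_comm]
  have hdisc : B^2 < 4*(C*A) := by
    rw [hb2, hca, ← mul_div_assoc, div_lt_div_iff₀ (by positivity) (by positivity)]
    have key := keyP_stmt14 u v hu0 hu1 hv0 hv1 hcon
    calc ((u-v)*(1+2*(u*v)))^2 * (((1-u^2)^2*(u*v))*(2*(u*v)*(1-u^2)))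
        = (2*(u*v)^2*(1-u^2)) * ((1-u^2)^2*(u-v)^2*(1+2*(u*v))^2) := by ring
      _ < (2*(u*v)^2*(1-u^2)) * (8*(u^2+v^2-2*u^2*v^2)*((u*v)*(1-u^2)^2+2*(u-v)^2)) := by
          exact mul_lt_mul_of_pos_left key (by positivity)
      _ = 4*(((u*v)*(1-u^2)^2+2*(u-v)^2)*(u^2*(1-v^2)+v^2*(1-u^2))) * (4*((1-u^2)*(u*v)^2)) := by
          ring
  nlinarith [sq_nonneg (2*A*δ + B), ha0, hdisc, mul_pos ha0 ha0]

set_option maxHeartbeats 1000000 in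
theorem stmt_14 (γ δ : ℝ) (hγ1 : 0 < γ) (hγ2 : γ ≤ 11/12) :
    StrictMonoOn
      (fun x : ℝ =>
        ((2 - x)^2 - 4 * Real.sqrt (1 - x) * Real.sqrt (1 - γ*x)) / x
        + δ * Real.sqrt x * (Real.sqrt (1 - x) - Real.sqrt (1 - γ*x))
        + δ^2 * (1 - Real.sqrt (1 - x) * Real.sqrt (1 - γ*x)))
      (Set.Ioo (0:ℝ) 1) := by
  have main : ∀ x ∈ Set.Ioo (0:ℝ) 1, ∃ E, 0 < E ∧ HasDerivAt
      (fun x : ℝ =>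
        ((2 - x)^2 - 4 * Real.sqrt (1 - x) * Real.sqrt (1 - γ*x)) / x
        + δ * Real.sqrt x * (Real.sqrt (1 - x) - Real.sqrt (1 - γ*x))
        + δ^2 * (1 - Real.sqrt (1 - x) * Real.sqrt (1 - γ*x))) E x := by
    rintro x ⟨hx0, hx1⟩
    set u := Real.sqrt (1-x) with hu
    set v := Real.sqrt (1-γ*x) with hv
    set s := Real.sqrt x with hs
    have h1x : (0:ℝ) < 1 - x := by linarith
    have h1gx : (0:ℝ) < 1 - γ*x := by nlinarith
    have hu0 : 0 < u := Real.sqrt_pos.2 h1x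
    have hv0 : 0 < v := Real.sqrt_pos.2 h1gx
    have hs0 : 0 < s := Real.sqrt_pos.2 hx0
    have hu2 : u^2 = 1-x := Real.sq_sqrt h1x.le
    have hv2 : v^2 = 1-γ*x := Real.sq_sqrt h1gx.le
    have hs2 : s^2 = x := Real.sq_sqrt hx0.le
    have hu1 : u < 1 := by nlinarith
    have hv1 : v ≤ 1 := by nlinarith
    have hcon : 1 + 11*u^2 ≤ 12*v^2 := by rw [hu2, hv2]; nlinarith
    have hgx : γ*x = 1-v^2 := by linarith
    have hxu : x = 1-u^2 := by linarith
    have hs2' : s^2 = 1-u^2 := by rw [hs2, hxu]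
    -- derivative pieces
    have hu' : HasDerivAt (fun y : ℝ => Real.sqrt (1-y)) (1/(2*u) * (-1)) x :=
      (Real.hasDerivAt_sqrt h1x.ne').comp x ((hasDerivAt_id x).const_sub 1)
    have hv' : HasDerivAt (fun y : ℝ => Real.sqrt (1-γ*y)) (1/(2*v) * (-(γ*1))) x :=
      (Real.hasDerivAt_sqrt h1gx.ne').comp x (((hasDerivAt_id x).const_mul γ).const_sub 1)
    have hs' : HasDerivAt (fun y : ℝ => Real.sqrt y) (1/(2*s)) x := Real.hasDerivAt_sqrt hx0.ne'
    have hN : HasDerivAt (fun y : ℝ => (2-y)^2 - 4 * Real.sqrt (1-y) * Real.sqrt (1-γ*y))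
        ((2:ℕ) * (2-x)^1 * (-1) - ((4 * (1/(2*u) * (-1)) ) * v + (4*u) * (1/(2*v) * (-(γ*1))))) x :=
      (((hasDerivAt_id x).const_sub 2).pow 2).sub ((hu'.const_mul 4).mul hv')
    have hA : HasDerivAt (fun y : ℝ => ((2-y)^2 - 4 * Real.sqrt (1-y) * Real.sqrt (1-γ*y))/y)
        ((((2:ℕ) * (2-x)^1 * (-1) - ((4 * (1/(2*u) * (-1))) * v + (4*u) * (1/(2*v) * (-(γ*1))))) * x
          - ((2-x)^2 - 4*u*v) * 1)/x^2) x := hN.div (hasDerivAt_id x) hx0.ne'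
    have hB : HasDerivAt (fun y : ℝ => δ * Real.sqrt y * (Real.sqrt (1-y) - Real.sqrt (1-γ*y)))
        ((δ * (1/(2*s))) * (u - v) + (δ * s) * (1/(2*u) * (-1) - 1/(2*v) * (-(γ*1)))) x :=
      (hs'.const_mul δ).mul (hu'.sub hv')
    have hC : HasDerivAt (fun y : ℝ => δ^2 * (1 - Real.sqrt (1-y) * Real.sqrt (1-γ*y)))
        (δ^2 * (0 - ((1/(2*u) * (-1)) * v + u * (1/(2*v) * (-(γ*1)))))) x :=
      ((hasDerivAt_const x 1).sub (hu'.mul hv')).const_mul (δ^2)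
    refine ⟨((u*v)*x^2+2*(u-v)^2)/(x^2*(u*v))
      + δ*((u-v)*(1+2*(u*v))/(2*(s*(u*v))))
      + δ^2*((u^2*(1-v^2)+v^2*(1-u^2))/(2*(u*v)*(1-u^2))), ?_, ?_⟩
    · have := derivPos_stmt14 δ u v s hu0 hu1 hv0 hv1 hs0 hs2' hcon
      calc (0:ℝ) < _ := this
        _ = _ := by rw [hxu]
    · refine HasDerivAt.congr_deriv ((hA.add hB).add hC) ?_
      rw [eqA_stmt14 γ x u v hu0.ne' hv0.ne' hx0.ne' hgx hxu]
      rw [eqC_stmt14 γ x u v hu0.ne' hv0.ne' (by rw [← hxu]; exact hx0.ne') hgx hxu]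
      rw [show (δ * (1/(2*s))) * (u - v) + (δ * s) * (1/(2*u) * (-1) - 1/(2*v) * (-(γ*1)))
          = δ * ((1/(2*s))*(u-v) + s*(1/(2*u)*(-1) - 1/(2*v)*(-(γ*1)))) by ring]
      rw [eqB_stmt14 γ x u v s hu0.ne' hv0.ne' hs0.ne' hs2 hgx hxu]
  apply strictMonoOn_of_deriv_pos (convex_Ioo 0 1)
  · intro x hx
    obtain ⟨E, _, hE⟩ := main x hx
    exact hE.differentiableAt.continuousAt.continuousWithinAt
  · intro x hx
    rw [interior_Ioo] at hx
    obtain ⟨E, hEpos, hE⟩ := main x hx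
    rw [hE.deriv]
    exact hEpos
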